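/- Under the perfect-ranking MinPNS model with set size m and stratum proportions λ_1, …, λ_m ∈ (0,1) summing to 1, fix t with F(t) ∈ (0,1), and define σ_mb²(t) = ( ∑_{r=1}^m λ_r·𝔹_(r)(F(t))·(1 − 𝔹_(r)(F(t))) ) / ( ∑_{r=1}^m λ_r·β_(r)(F(t)) )² and σ_ml²(t) = ( ∑_{r=1}^m λ_r·β_(r)(F(t))² / ( 𝔹_(r)(F(t))·(1 − 𝔹_(r)(F(t))) ) )⁻¹. Then σ_ml²(t) ≤ σ_mb²(t), and equality holds if and only if either m = 1 or there exists r ∈ {1, …, m} such that λ_r = 1. -/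

import Mathlib

open Finset

/-- The Beta(i, m+1-i) cumulative distribution function evaluated at `x`. -/
noncomputable def betaCDF (m i : ℕ) (x : ℝ) : ℝ :=
  ∫ u in (0:ℝ)..x, (i : ℝ) * (m.choose i : ℝ) * u ^ (i - 1) * (1 - u) ^ (m - i)

/-- The Beta(i, m+1-i) probability density function evaluated at `x`. -/
noncomputable def betaPDF (m i : ℕ) (x : ℝ) : ℝ :=
  (i : ℝ) * (m.choose i : ℝ) * x ^ (i - 1) * (1 - x) ^ (m - i)

/-- `𝔹_(r)(x) = (1/r) ∑_{i=1}^r 𝔹(x, i, m+1-i)`. -/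
noncomputable def strataCDF (m r : ℕ) (x : ℝ) : ℝ :=
  (1 / r : ℝ) * ∑ i ∈ Finset.Icc 1 r, betaCDF m i x

/-- `β_(r)(x) = (1/r) ∑_{i=1}^r i C(m,i) x^{i-1} (1-x)^{m-i}`, the derivative of `𝔹_(r)`. -/
noncomputable def strataPDF (m r : ℕ) (x : ℝ) : ℝ :=
  (1 / r : ℝ) * ∑ i ∈ Finset.Icc 1 r, betaPDF m i x

lemma sum_Icc_eq_range (m : ℕ) (f : ℕ → ℝ) :
    ∑ j ∈ Icc 1 m, f j = ∑ k ∈ range m, f (k + 1) := by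
  have h0 : range (m + 1) = insert 0 (Icc 1 m) := by ext a; simp; omega
  have h1 : ∑ j ∈ range (m + 1), f j = f 0 + ∑ j ∈ Icc 1 m, f j := by
    rw [h0, Finset.sum_insert (by simp)]
  have h2 := Finset.sum_range_succ' f m
  -- h2 : ∑ i ∈ range (m+1), f i = (∑ i ∈ range m, f (i+1)) + f 0
  linarith [h1, h2]

lemma binom_sum (m : ℕ) (x : ℝ) :
    ∑ k ∈ range (m + 1), x ^ k * (1 - x) ^ (m - k) * (m.choose k : ℝ) = 1 := by
  have := add_pow x (1 - x) m
  simp at this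
  rw [← this]

lemma sum_Icc_binom (m : ℕ) (x : ℝ) :
    ∑ j ∈ Icc 1 m, (m.choose j : ℝ) * x ^ j * (1 - x) ^ (m - j) = 1 - (1 - x) ^ m := by
  have h0 : range (m + 1) = insert 0 (Icc 1 m) := by ext a; simp; omega
  have hb := binom_sum m x
  rw [h0, Finset.sum_insert (by simp)] at hb
  simp at hb
  have : ∑ j ∈ Icc 1 m, x ^ j * (1 - x) ^ (m - j) * (m.choose j : ℝ)
      = ∑ j ∈ Icc 1 m, (m.choose j : ℝ) * x ^ j * (1 - x) ^ (m - j) :=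
    Finset.sum_congr rfl fun j _ => by ring
  linarith [hb, this]

-- derivative of one term
lemma hasDerivAt_term (m j : ℕ) (x : ℝ) :
    HasDerivAt (fun y : ℝ => (m.choose j : ℝ) * y ^ j * (1 - y) ^ (m - j))
      ((j : ℝ) * (m.choose j : ℝ) * x ^ (j - 1) * (1 - x) ^ (m - j)
        - ((m - j : ℕ) : ℝ) * (m.choose j : ℝ) * x ^ j * (1 - x) ^ (m - j - 1)) x := by
  have h1 : HasDerivAt (fun y : ℝ => y ^ j) ((j : ℝ) * x ^ (j - 1)) x := hasDerivAt_pow j x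
  have hin : HasDerivAt (fun y : ℝ => 1 - y) (-1) x := by
    simpa using (hasDerivAt_id' x).const_sub (1:ℝ)
  have h2 : HasDerivAt (fun y : ℝ => (1 - y) ^ (m - j))
      (((m - j : ℕ) : ℝ) * (1 - x) ^ (m - j - 1) * (-1)) x :=
    (hasDerivAt_pow (m - j) (1 - x)).comp x hin
  have := ((h1.mul h2).const_mul ((m.choose j : ℝ)))
  exact (this.congr_deriv (by ring)).congr_of_eventuallyEq
    (Filter.Eventually.of_forall fun y => by simp only [Pi.mul_apply]; ring)

lemma telescope (a : ℕ → ℝ) (i m : ℕ) (h : i ≤ m) :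
    ∑ j ∈ Icc i m, (a j - a (j + 1)) = a i - a (m + 1) := by
  induction m, h using Nat.le_induction with
  | base => simp
  | succ n hn ih => rw [Finset.sum_Icc_succ_top (le_trans hn (Nat.le_succ n)), ih]; ring

lemma pdf_succ (m j : ℕ) (x : ℝ) (hj : 1 ≤ j) :
    ((m - j : ℕ) : ℝ) * (m.choose j : ℝ) * x ^ j * (1 - x) ^ (m - j - 1)
      = betaPDF m (j + 1) x := by
  unfold betaPDF
  have h : (m.choose (j+1)) * (j + 1) = m.choose j * (m - j) := Nat.choose_succ_right_eq m j
  have hc : ((j:ℝ) + 1) * (m.choose (j+1) : ℝ) = ((m - j : ℕ) : ℝ) * (m.choose j : ℝ) := by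
    have := congrArg (fun n : ℕ => (n : ℝ)) h
    push_cast at this
    linarith [this]
  have hx : x ^ (j + 1 - 1) = x ^ j := by norm_num
  have hm : m - (j + 1) = m - j - 1 := by omega
  rw [hx, hm]
  push_cast
  linear_combination x ^ j * (1 - x) ^ (m - j - 1) * hc.symm

lemma hasDerivAt_G (m i : ℕ) (hi : 1 ≤ i) (him : i ≤ m) (x : ℝ) :
    HasDerivAt (fun y : ℝ => ∑ j ∈ Icc i m, (m.choose j : ℝ) * y ^ j * (1 - y) ^ (m - j))
      (betaPDF m i x) x := by
  have h : HasDerivAt (fun y : ℝ => ∑ j ∈ Icc i m, (m.choose j : ℝ) * y ^ j * (1 - y) ^ (m - j))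
      (∑ j ∈ Icc i m, ((j : ℝ) * (m.choose j : ℝ) * x ^ (j - 1) * (1 - x) ^ (m - j)
        - ((m - j : ℕ) : ℝ) * (m.choose j : ℝ) * x ^ j * (1 - x) ^ (m - j - 1))) x :=
    HasDerivAt.fun_sum fun j _ => hasDerivAt_term m j x
  convert h using 1
  have heq : ∑ j ∈ Icc i m, ((j : ℝ) * (m.choose j : ℝ) * x ^ (j - 1) * (1 - x) ^ (m - j)
        - ((m - j : ℕ) : ℝ) * (m.choose j : ℝ) * x ^ j * (1 - x) ^ (m - j - 1))
      = ∑ j ∈ Icc i m, (betaPDF m j x - betaPDF m (j + 1) x) := by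
    refine Finset.sum_congr rfl fun j hj => ?_
    simp only [Finset.mem_Icc] at hj
    rw [pdf_succ m j x (le_trans hi hj.1)]
    rfl
  rw [heq, telescope (fun j => betaPDF m j x) i m him]
  have : betaPDF m (m + 1) x = 0 := by
    unfold betaPDF
    rw [Nat.choose_succ_self]
    norm_num
  rw [this, sub_zero]

lemma betaPDF_cont (m i : ℕ) : Continuous (fun u : ℝ =>
    (i : ℝ) * (m.choose i : ℝ) * u ^ (i - 1) * (1 - u) ^ (m - i)) := by
  continuity

lemma betaCDF_eq (m i : ℕ) (hi : 1 ≤ i) (him : i ≤ m) (x : ℝ) :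
    betaCDF m i x = ∑ j ∈ Icc i m, (m.choose j : ℝ) * x ^ j * (1 - x) ^ (m - j) := by
  unfold betaCDF
  have hftc := intervalIntegral.integral_eq_sub_of_hasDerivAt
    (f := fun y : ℝ => ∑ j ∈ Icc i m, (m.choose j : ℝ) * y ^ j * (1 - y) ^ (m - j))
    (f' := fun u : ℝ => (i : ℝ) * (m.choose i : ℝ) * u ^ (i - 1) * (1 - u) ^ (m - i))
    (a := 0) (b := x)
    (fun u _ => hasDerivAt_G m i hi him u)
    ((betaPDF_cont m i).intervalIntegrable 0 x)
  rw [hftc]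
  beta_reduce
  have h0 : ∑ j ∈ Icc i m, (m.choose j : ℝ) * (0:ℝ) ^ j * ((1:ℝ) - 0) ^ (m - j) = 0 := by
    refine Finset.sum_eq_zero fun j hj => ?_
    simp only [Finset.mem_Icc] at hj
    rw [zero_pow (by omega : j ≠ 0)]
    ring
  rw [h0, sub_zero]


variable {m : ℕ} {x : ℝ}

lemma betaCDF_pos (hi : 1 ≤ m) (i : ℕ) (h1 : 1 ≤ i) (h2 : i ≤ m) (hx : 0 < x) (hx1 : x < 1) :
    0 < betaCDF m i x := by
  rw [betaCDF_eq m i h1 h2 x]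
  refine Finset.sum_pos' (fun j hj => ?_) ⟨m, by simp [h2], ?_⟩
  · simp only [Finset.mem_Icc] at hj
    have : (0:ℝ) ≤ 1 - x := by linarith
    positivity
  · simp only [Nat.choose_self, Nat.cast_one, one_mul, Nat.sub_self, pow_zero, mul_one]
    positivity

lemma betaCDF_lt_one (i : ℕ) (h1 : 1 ≤ i) (h2 : i ≤ m) (hx : 0 < x) (hx1 : x < 1) :
    betaCDF m i x < 1 := by
  rw [betaCDF_eq m i h1 h2 x]
  have hsub : Finset.Icc i m ⊆ Finset.Icc 1 m := Finset.Icc_subset_Icc h1 le_rfl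
  have h1x : (0:ℝ) < 1 - x := by linarith
  have hle : ∑ j ∈ Icc i m, (m.choose j : ℝ) * x ^ j * (1 - x) ^ (m - j)
      ≤ ∑ j ∈ Icc 1 m, (m.choose j : ℝ) * x ^ j * (1 - x) ^ (m - j) := by
    refine Finset.sum_le_sum_of_subset_of_nonneg hsub fun j hj _ => ?_
    positivity
  rw [sum_Icc_binom m x] at hle
  have : (0:ℝ) < (1 - x) ^ m := by positivity
  linarith

lemma strataCDF_mem (hm : 1 ≤ m) (r : ℕ) (h1 : 1 ≤ r) (h2 : r ≤ m) (hx : 0 < x) (hx1 : x < 1) :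
    0 < strataCDF m r x ∧ strataCDF m r x < 1 := by
  have hr0 : (0:ℝ) < (r:ℝ) := by exact_mod_cast h1
  have hpos : 0 < ∑ i ∈ Icc 1 r, betaCDF m i x := by
    refine Finset.sum_pos (fun i hi => ?_) ⟨1, by simp [h1]⟩
    simp only [Finset.mem_Icc] at hi
    exact betaCDF_pos hm i hi.1 (le_trans hi.2 h2) hx hx1
  have hlt : ∑ i ∈ Icc 1 r, betaCDF m i x < (r:ℝ) := by
    have := Finset.sum_lt_sum_of_nonempty (s := Icc 1 r)
      (f := fun i => betaCDF m i x) (g := fun _ => (1:ℝ)) ⟨1, by simp [h1]⟩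
      (fun i hi => by
        simp only [Finset.mem_Icc] at hi
        exact betaCDF_lt_one i hi.1 (le_trans hi.2 h2) hx hx1)
    simpa [Nat.card_Icc] using this
  constructor
  · unfold strataCDF; positivity
  · unfold strataCDF
    rw [div_mul_eq_mul_div, one_mul, div_lt_one hr0]
    exact hlt

lemma strataPDF_pos (hm : 1 ≤ m) (r : ℕ) (h1 : 1 ≤ r) (h2 : r ≤ m) (hx : 0 < x) (hx1 : x < 1) :
    0 < strataPDF m r x := by
  have hr0 : (0:ℝ) < (r:ℝ) := by exact_mod_cast h1
  have hpos : 0 < ∑ i ∈ Icc 1 r, betaPDF m i x := by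
    refine Finset.sum_pos (fun i hi => ?_) ⟨1, by simp [h1]⟩
    simp only [Finset.mem_Icc] at hi
    unfold betaPDF
    have hi1 : (0:ℝ) < (i:ℝ) := by exact_mod_cast hi.1
    have hc : 0 < (m.choose i : ℝ) := by
      exact_mod_cast Nat.choose_pos (le_trans hi.2 h2)
    have : (0:ℝ) < 1 - x := by linarith
    positivity
  unfold strataPDF; positivity

lemma strataCDF_one (hm : 1 ≤ m) : strataCDF m 1 x = 1 - (1 - x) ^ m := by
  unfold strataCDF
  rw [Finset.Icc_self, Finset.sum_singleton, betaCDF_eq m 1 le_rfl hm x, sum_Icc_binom m x]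
  norm_num

lemma strataPDF_one : strataPDF m 1 x = (m:ℝ) * (1 - x) ^ (m - 1) := by
  unfold strataPDF betaPDF
  rw [Finset.Icc_self, Finset.sum_singleton]
  simp [Nat.choose_one_right]

lemma sum_j_binom (hm : 1 ≤ m) :
    ∑ j ∈ Icc 1 m, (j:ℝ) * (m.choose j : ℝ) * x ^ j * (1 - x) ^ (m - j) = (m:ℝ) * x := by
  rw [sum_Icc_eq_range]
  have hterm : ∀ k, k < m → ((k:ℝ) + 1) * (m.choose (k+1) : ℝ) * x ^ (k+1) * (1 - x) ^ (m - (k+1))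
      = (m:ℝ) * x * (((m-1).choose k : ℝ) * x ^ k * (1 - x) ^ ((m-1) - k)) := by
    intro k hk
    have h := Nat.add_one_mul_choose_eq (m - 1) k
    have hm1 : m - 1 + 1 = m := by omega
    simp only [Nat.succ_eq_add_one, hm1] at h
    have hc : (m:ℝ) * ((m-1).choose k : ℝ) = (m.choose (k+1) : ℝ) * ((k:ℝ) + 1) := by
      exact_mod_cast congrArg (fun n : ℕ => (n : ℝ)) h
    have he : m - (k+1) = (m-1) - k := by omega
    rw [he]
    linear_combination (-(x ^ (k+1) * (1 - x) ^ ((m-1) - k))) * hc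
  have : ∑ k ∈ range m, ((k:ℝ) + 1) * (m.choose (k+1) : ℝ) * x ^ (k+1) * (1 - x) ^ (m - (k+1))
      = ∑ k ∈ range m, (m:ℝ) * x * (((m-1).choose k : ℝ) * x ^ k * (1 - x) ^ ((m-1) - k)) :=
    Finset.sum_congr rfl fun k hk => hterm k (Finset.mem_range.mp hk)
  push_cast at this ⊢
  rw [this, ← Finset.mul_sum]
  have hb : ∑ k ∈ range m, ((m-1).choose k : ℝ) * x ^ k * (1 - x) ^ ((m-1) - k) = 1 := by
    have h2 := binom_sum (m-1) x
    have hmr : (m-1) + 1 = m := by omega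
    rw [hmr] at h2
    have h3 : ∑ k ∈ range m, ((m-1).choose k : ℝ) * x ^ k * (1 - x) ^ ((m-1) - k)
        = ∑ k ∈ range m, x ^ k * (1 - x) ^ ((m-1) - k) * ((m-1).choose k : ℝ) :=
      Finset.sum_congr rfl fun k _ => by ring
    rw [h3]
    exact h2
  rw [hb, mul_one]

lemma strataPDF_top (hm : 1 ≤ m) : strataPDF m m x = 1 := by
  unfold strataPDF betaPDF
  have hm0 : (0:ℝ) < (m:ℝ) := by exact_mod_cast hm
  rw [sum_Icc_eq_range]
  have hterm : ∀ k, k < m → ((k:ℝ) + 1) * (m.choose (k+1) : ℝ) * x ^ (k+1-1) * (1 - x) ^ (m - (k+1))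
      = (m:ℝ) * (((m-1).choose k : ℝ) * x ^ k * (1 - x) ^ ((m-1) - k)) := by
    intro k hk
    have h := Nat.add_one_mul_choose_eq (m - 1) k
    have hm1 : m - 1 + 1 = m := by omega
    simp only [Nat.succ_eq_add_one, hm1] at h
    have hc : (m:ℝ) * ((m-1).choose k : ℝ) = (m.choose (k+1) : ℝ) * ((k:ℝ) + 1) := by
      exact_mod_cast congrArg (fun n : ℕ => (n : ℝ)) h
    have he : m - (k+1) = (m-1) - k := by omega
    have he2 : k + 1 - 1 = k := by omega
    rw [he, he2]
    linear_combination (-(x ^ k * (1 - x) ^ ((m-1) - k))) * hc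
  have hs : ∑ k ∈ range m, ((k+1:ℕ):ℝ) * (m.choose (k+1) : ℝ) * x ^ (k+1-1) * (1 - x) ^ (m - (k+1))
      = ∑ k ∈ range m, (m:ℝ) * (((m-1).choose k : ℝ) * x ^ k * (1 - x) ^ ((m-1) - k)) := by
    refine Finset.sum_congr rfl fun k hk => ?_
    push_cast
    exact hterm k (Finset.mem_range.mp hk)
  rw [hs, ← Finset.mul_sum]
  have hb : ∑ k ∈ range m, ((m-1).choose k : ℝ) * x ^ k * (1 - x) ^ ((m-1) - k) = 1 := by
    have h2 := binom_sum (m-1) x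
    have hmr : (m-1) + 1 = m := by omega
    rw [hmr] at h2
    have h3 : ∑ k ∈ range m, ((m-1).choose k : ℝ) * x ^ k * (1 - x) ^ ((m-1) - k)
        = ∑ k ∈ range m, x ^ k * (1 - x) ^ ((m-1) - k) * ((m-1).choose k : ℝ) :=
      Finset.sum_congr rfl fun k _ => by ring
    rw [h3]
    exact h2
  rw [hb, mul_one]
  field_simp

lemma strataCDF_top (hm : 1 ≤ m) : strataCDF m m x = x := by
  unfold strataCDF
  have hm0 : (0:ℝ) < (m:ℝ) := by exact_mod_cast hm
  have hswap : ∑ i ∈ Icc 1 m, betaCDF m i x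
      = ∑ j ∈ Icc 1 m, (j:ℝ) * ((m.choose j : ℝ) * x ^ j * (1 - x) ^ (m - j)) := by
    have h1 : ∑ i ∈ Icc 1 m, betaCDF m i x
        = ∑ i ∈ Icc 1 m, ∑ j ∈ Icc i m, (m.choose j : ℝ) * x ^ j * (1 - x) ^ (m - j) := by
      refine Finset.sum_congr rfl fun i hi => ?_
      simp only [Finset.mem_Icc] at hi
      exact betaCDF_eq m i hi.1 hi.2 x
    rw [h1]
    rw [Finset.sum_comm' (s' := fun j => Icc 1 j) (t' := Icc 1 m)
      (by intro i j; simp only [Finset.mem_Icc]; omega)]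
    refine Finset.sum_congr rfl fun j hj => ?_
    rw [Finset.sum_const, Nat.card_Icc]
    simp only [Nat.add_sub_cancel, nsmul_eq_mul]
  rw [hswap]
  have : ∑ j ∈ Icc 1 m, (j:ℝ) * ((m.choose j : ℝ) * x ^ j * (1 - x) ^ (m - j)) = (m:ℝ) * x := by
    rw [← sum_j_binom hm]
    exact Finset.sum_congr rfl fun j _ => by ring
  rw [this]
  field_simp

lemma bernoulli_strict (x : ℝ) (hx : 0 < x) (hx1 : x < 1) {m : ℕ} (hm : 2 ≤ m) :
    1 - (m:ℝ) * x < (1 - x) ^ m := by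
  induction m, hm using Nat.le_induction with
  | base => push_cast; nlinarith
  | succ n hn ih =>
    have h1x : (0:ℝ) < 1 - x := by linarith
    have : (1 - x) ^ (n + 1) = (1 - x) ^ n * (1 - x) := by ring
    rw [this]
    push_cast
    have hstep := mul_lt_mul_of_pos_right ih h1x
    have hn0 : (0:ℝ) ≤ (n:ℝ) := Nat.cast_nonneg n
    nlinarith [hstep, mul_nonneg hn0 (mul_nonneg hx.le hx.le)]

lemma cs_strict (s : Finset ℕ) (p V b : ℕ → ℝ)
    (hp : ∀ r ∈ s, 0 < p r) (hV : ∀ r ∈ s, 0 < V r)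
    (u v : ℕ) (hu : u ∈ s) (hv : v ∈ s) (huv : u ≠ v)
    (hne : b u * V v ≠ b v * V u) :
    (∑ r ∈ s, p r * b r) ^ 2 < (∑ r ∈ s, p r * V r) * (∑ r ∈ s, p r * b r ^ 2 / V r) := by
  set S1 := ∑ r ∈ s, p r * V r with hS1def
  set S2 := ∑ r ∈ s, p r * b r ^ 2 / V r with hS2def
  set D := ∑ r ∈ s, p r * b r with hDdef
  have hS1 : 0 < S1 :=
    Finset.sum_pos (fun r hr => mul_pos (hp r hr) (hV r hr)) ⟨u, hu⟩
  set θ := D / S1 with hθdef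
  have key : ∑ r ∈ s, p r * (b r - θ * V r) ^ 2 / V r = S2 - 2 * θ * D + θ ^ 2 * S1 := by
    have hpt : ∀ r ∈ s, p r * (b r - θ * V r) ^ 2 / V r
        = p r * b r ^ 2 / V r - 2 * θ * (p r * b r) + θ ^ 2 * (p r * V r) := by
      intro r hr
      have hVr := hV r hr
      field_simp
      ring
    rw [Finset.sum_congr rfl hpt, Finset.sum_add_distrib, Finset.sum_sub_distrib,
      ← Finset.mul_sum, ← Finset.mul_sum]
  have hposterm : ∀ r ∈ s, 0 ≤ p r * (b r - θ * V r) ^ 2 / V r := fun r hr =>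
    div_nonneg (mul_nonneg (le_of_lt (hp r hr)) (sq_nonneg _)) (le_of_lt (hV r hr))
  have hwitness : ∃ r ∈ s, 0 < p r * (b r - θ * V r) ^ 2 / V r := by
    by_cases hbu : b u - θ * V u = 0
    · refine ⟨v, hv, ?_⟩
      have hbv : b v - θ * V v ≠ 0 := by
        intro hbv
        apply hne
        have h1 : b u = θ * V u := by linarith [hbu]
        have h2 : b v = θ * V v := by linarith [hbv]
        rw [h1, h2]; ring
      exact div_pos (mul_pos (hp v hv) (by positivity)) (hV v hv)
    · exact ⟨u, hu, div_pos (mul_pos (hp u hu) (by positivity)) (hV u hu)⟩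
  have hsumpos : 0 < ∑ r ∈ s, p r * (b r - θ * V r) ^ 2 / V r :=
    Finset.sum_pos' hposterm hwitness
  rw [key] at hsumpos
  have hθD : θ * S1 = D := by rw [hθdef]; exact div_mul_cancel₀ D hS1.ne'
  have hfin : 0 < S2 - D ^ 2 / S1 := by
    have h1 : θ ^ 2 * S1 = D ^ 2 / S1 := by
      rw [hθdef]; field_simp
    have h2 : θ * D = D ^ 2 / S1 := by
      rw [hθdef]; field_simp
    nlinarith [hsumpos, h1, h2]
  have := (div_lt_iff₀ hS1).mp (by linarith : D ^ 2 / S1 < S2)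
  linarith [this]

/-- The asymptotic variance of the moment-based estimator of `F(t)` in perfect-ranking
MinPNS: `σ_mb²(t) = (∑_r λ_r 𝔹_(r)(F t)(1-𝔹_(r)(F t))) / (∑_r λ_r β_(r)(F t))²`. -/
noncomputable def sigmaMBsq (m : ℕ) (lam : ℕ → ℝ) (x : ℝ) : ℝ :=
  (∑ r ∈ Finset.Icc 1 m, lam r * strataCDF m r x * (1 - strataCDF m r x))
    / (∑ r ∈ Finset.Icc 1 m, lam r * strataPDF m r x) ^ 2

/-- The asymptotic variance of the maximum likelihood estimator of `F(t)` in
perfect-ranking MinPNS: `σ_ml²(t) = (∑_r λ_r β_(r)(F t)² / (𝔹_(r)(F t)(1-𝔹_(r)(F t))))⁻¹`. -/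
noncomputable def sigmaMLsq (m : ℕ) (lam : ℕ → ℝ) (x : ℝ) : ℝ :=
  (∑ r ∈ Finset.Icc 1 m,
    lam r * (strataPDF m r x) ^ 2 / (strataCDF m r x * (1 - strataCDF m r x)))⁻¹

/-- **The ML estimator is asymptotically at least as efficient as the moment-based
estimator.** Under perfect-ranking MinPNS with set size `m`, stratum proportions
`λ_r ∈ (0,1)` summing to `1`, and `F(t) ∈ (0,1)`, one has `σ_ml²(t) ≤ σ_mb²(t)`, with
equality iff `m = 1` or `λ_r = 1` for some `r`. -/
theorem sigmaML_le_sigmaMB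
    (m : ℕ) (hm : 1 ≤ m) (lam : ℕ → ℝ)
    (hlam : ∀ r ∈ Finset.Icc 1 m, lam r ∈ Set.Ioo (0:ℝ) 1)
    (hsum : ∑ r ∈ Finset.Icc 1 m, lam r = 1)
    (F : ℝ → ℝ) (t : ℝ) (hFt : F t ∈ Set.Ioo (0:ℝ) 1) :
    sigmaMLsq m lam (F t) ≤ sigmaMBsq m lam (F t) ∧
    (sigmaMLsq m lam (F t) = sigmaMBsq m lam (F t)
      ↔ m = 1 ∨ ∃ r ∈ Finset.Icc 1 m, lam r = 1) := by
  obtain ⟨hx, hx1⟩ := hFt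
  set x := F t with hxdef
  rcases eq_or_lt_of_le hm with h1 | hm2'
  · exfalso
    rw [← h1] at hsum hlam
    rw [Finset.Icc_self, Finset.sum_singleton] at hsum
    have := (hlam 1 (by simp)).2
    linarith
  have hm2 : 2 ≤ m := hm2'
  have h1x : (0:ℝ) < 1 - x := by linarith
  -- setup
  set B : ℕ → ℝ := fun r => strataCDF m r x with hBdef
  set b : ℕ → ℝ := fun r => strataPDF m r x with hbdef
  set V : ℕ → ℝ := fun r => strataCDF m r x * (1 - strataCDF m r x) with hVdef
  have hV : ∀ r ∈ Finset.Icc 1 m, 0 < V r := by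
    intro r hr
    simp only [Finset.mem_Icc] at hr
    obtain ⟨hB0, hB1⟩ := strataCDF_mem hm r hr.1 hr.2 hx hx1
    exact mul_pos hB0 (by linarith)
  have hb : ∀ r ∈ Finset.Icc 1 m, 0 < b r := by
    intro r hr
    simp only [Finset.mem_Icc] at hr
    exact strataPDF_pos hm r hr.1 hr.2 hx hx1
  have hp : ∀ r ∈ Finset.Icc 1 m, 0 < lam r := fun r hr => (hlam r hr).1
  have h1m : (1:ℕ) ∈ Finset.Icc 1 m := by simp [hm]
  have hmm : m ∈ Finset.Icc 1 m := by simp [hm]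
  -- non-proportionality at r = 1 and r = m
  have hne : b 1 * V m ≠ b m * V 1 := by
    have hb1 : b 1 = (m:ℝ) * (1 - x) ^ (m - 1) := strataPDF_one
    have hbm : b m = 1 := strataPDF_top hm
    have hVm : V m = x * (1 - x) := by
      simp only [hVdef]; rw [strataCDF_top hm]
    have hV1 : V 1 = (1 - (1 - x) ^ m) * (1 - x) ^ m := by
      simp only [hVdef]; rw [strataCDF_one hm]; ring
    rw [hb1, hbm, hVm, hV1, one_mul]
    intro heq
    have hpow : (1 - x) ^ (m - 1) * (1 - x) = (1 - x) ^ m := by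
      rw [← pow_succ]
      congr 1
      omega
    have heq2 : (m:ℝ) * x * (1 - x) ^ m = (1 - (1 - x) ^ m) * (1 - x) ^ m := by
      rw [← hpow] at heq ⊢; linear_combination heq
    have hpm : (0:ℝ) < (1 - x) ^ m := by positivity
    have heq3 : (m:ℝ) * x = 1 - (1 - x) ^ m := by
      have := mul_right_cancel₀ (ne_of_gt hpm) heq2
      exact this
    have := bernoulli_strict x hx hx1 hm2
    linarith
  have hkey := cs_strict (Finset.Icc 1 m) lam V b hp hV 1 m h1m hmm
    (by omega) hne
  -- abbreviations
  set S1 := ∑ r ∈ Finset.Icc 1 m, lam r * V r with hS1def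
  set S2 := ∑ r ∈ Finset.Icc 1 m, lam r * b r ^ 2 / V r with hS2def
  set D := ∑ r ∈ Finset.Icc 1 m, lam r * b r with hDdef
  have hS1 : 0 < S1 := Finset.sum_pos (fun r hr => mul_pos (hp r hr) (hV r hr)) ⟨1, h1m⟩
  have hS2 : 0 < S2 := Finset.sum_pos
    (fun r hr => div_pos (mul_pos (hp r hr) (pow_pos (hb r hr) 2)) (hV r hr)) ⟨1, h1m⟩
  have hD : 0 < D := Finset.sum_pos (fun r hr => mul_pos (hp r hr) (hb r hr)) ⟨1, h1m⟩
  -- identify sigma's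
  have hMB : sigmaMBsq m lam x = S1 / D ^ 2 := by
    unfold sigmaMBsq
    congr 1
    exact Finset.sum_congr rfl fun r _ => by simp only [hVdef]; ring
  have hML : sigmaMLsq m lam x = S2⁻¹ := rfl
  have hlt : sigmaMLsq m lam x < sigmaMBsq m lam x := by
    rw [hMB, hML, inv_eq_one_div]
    rw [div_lt_div_iff₀ hS2 (pow_pos hD 2)]
    nlinarith [hkey]
  refine ⟨le_of_lt hlt, ?_, ?_⟩
  · intro h
    exact absurd h (ne_of_lt hlt)
  · rintro (h1 | ⟨r, hr, hr1⟩)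
    · omega
    · have := (hlam r hr).2
      linarith
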